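/- Let β∈(0,1], let f be integrable on (0,∞) and let g be measurable on (0,∞) with ‖g‖_{L_1^{0,β}} = ∫₀^∞ |g(v)| K₀(βv) dv < ∞. Then the double integral defining (f⋆g)(x) converges absolutely for almost every x>0, the function f⋆g is integrable on (0,∞), and ‖f⋆g‖_{L_1(0,∞)} ≤ 2·‖f‖_{L_1(0,∞)}·‖g‖_{L_1^{0,β}}. -/

import Mathlib

open MeasureTheory Real Set

/-- The kernel function φ(x,u,v). -/
noncomputable def phiKer (x u v : ℝ) : ℝ :=
  Real.exp (-v * Real.cosh (x + u - 1)) + Real.exp (-v * Real.cosh (x - u + 1))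
    - Real.exp (-v * Real.cosh (x + u + 1)) - Real.exp (-v * Real.cosh (x - u - 1))

/-- The modified Bessel function of the second kind of order zero. -/
noncomputable def K0 (v : ℝ) : ℝ := ∫ t in Set.Ioi (0 : ℝ), Real.exp (-v * Real.cosh t)

/-- The trigonometric-weighted generalized convolution (f ⋆ g). -/
noncomputable def gconv (f g : ℝ → ℝ) (x : ℝ) : ℝ :=
  (1 / 4) * ∫ v in Set.Ioi (0 : ℝ), ∫ u in Set.Ioi (0 : ℝ), phiKer x u v * f u * g v

/-- Fourier cosine transform. -/
noncomputable def Fc (f : ℝ → ℝ) (y : ℝ) : ℝ :=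
  Real.sqrt (2 / Real.pi) * ∫ x in Set.Ioi (0 : ℝ), f x * Real.cos (x * y)

/-- Fourier sine transform. -/
noncomputable def Fs (f : ℝ → ℝ) (y : ℝ) : ℝ :=
  Real.sqrt (2 / Real.pi) * ∫ x in Set.Ioi (0 : ℝ), f x * Real.sin (x * y)

/-- Modified Bessel function K_{iy}(x). -/
noncomputable def Kiy (y x : ℝ) : ℝ :=
  ∫ u in Set.Ioi (0 : ℝ), Real.exp (-x * Real.cosh u) * Real.cos (y * u)

/-- Kontorovich–Lebedev transform. -/
noncomputable def KL (g : ℝ → ℝ) (y : ℝ) : ℝ := ∫ x in Set.Ioi (0 : ℝ), Kiy y x * g x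

/-- Fourier cosine convolution. -/
noncomputable def fcConv (f g : ℝ → ℝ) (x : ℝ) : ℝ :=
  (1 / Real.sqrt (2 * Real.pi)) * ∫ u in Set.Ioi (0 : ℝ), f u * (g |x - u| + g (x + u))

/-- Fourier sine–cosine generalized convolution. -/
noncomputable def fscConv (f g : ℝ → ℝ) (x : ℝ) : ℝ :=
  (1 / Real.sqrt (2 * Real.pi)) * ∫ u in Set.Ioi (0 : ℝ), f u * (g |x - u| - g (x + u))

namespace GAux

lemma half_le_cosh (t : ℝ) : (1 + |t|) / 2 ≤ Real.cosh t := by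
  rw [← Real.cosh_abs, Real.cosh_eq]
  have h1 := Real.add_one_le_exp |t|
  have h2 := (Real.exp_pos (-|t|)).le
  linarith

lemma integrableOn_Ioi_exp_cosh {v : ℝ} (hv : 0 < v) :
    IntegrableOn (fun t => Real.exp (-v * Real.cosh t)) (Set.Ioi 0) := by
  refine Integrable.mono' (exp_neg_integrableOn_Ioi 0 (half_pos hv))
    ((Continuous.aestronglyMeasurable (by fun_prop)))
    ?_
  filter_upwards [ae_restrict_mem measurableSet_Ioi] with t ht
  rw [Real.norm_eq_abs, abs_of_pos (Real.exp_pos _), Real.exp_le_exp]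
  have h := half_le_cosh t
  rw [abs_of_pos ht] at h
  nlinarith [(show (0:ℝ) < t from ht).le]

lemma integrable_exp_cosh {v : ℝ} (hv : 0 < v) :
    Integrable (fun t => Real.exp (-v * Real.cosh t)) := by
  rw [← integrableOn_univ, ← Set.Iic_union_Ioi (a := (0:ℝ)), integrableOn_union]
  refine ⟨?_, integrableOn_Ioi_exp_cosh hv⟩
  rw [IntegrableOn, ← Measure.map_neg_eq_self (volume : Measure ℝ),
    measurableEmbedding_neg.restrict_map, measurableEmbedding_neg.integrable_map_iff]
  simp only [Function.comp_def, Real.cosh_neg, neg_preimage, neg_Iic, neg_zero]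
  exact Iff.mpr integrableOn_Ici_iff_integrableOn_Ioi (integrableOn_Ioi_exp_cosh hv)

lemma integral_exp_cosh (v : ℝ) :
    ∫ t, Real.exp (-v * Real.cosh t) = 2 * K0 v := by
  rw [K0, ← integral_comp_abs (f := fun t => Real.exp (-v * Real.cosh t))]
  congr 1
  funext t
  rw [Real.cosh_abs]


lemma integrable_shift {v : ℝ} (a : ℝ) (hv : 0 < v) :
    Integrable (fun x => Real.exp (-v * Real.cosh (x + a))) := by
  have := ((MeasureTheory.measurePreserving_add_right (volume : Measure ℝ) a).integrable_comp
    (Continuous.aestronglyMeasurable (by fun_prop : Continuous fun t : ℝ =>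
      Real.exp (-v * Real.cosh t)))).mpr (integrable_exp_cosh hv)
  exact this

lemma exp_cosh_nonneg (v t : ℝ) : 0 ≤ Real.exp (-v * Real.cosh t) := (Real.exp_pos _).le

lemma setIntegral_shift_le {v : ℝ} (a : ℝ) (hv : 0 < v) :
    ∫ x in Set.Ioi 0, Real.exp (-v * Real.cosh (x + a)) ≤ 2 * K0 v := by
  calc ∫ x in Set.Ioi 0, Real.exp (-v * Real.cosh (x + a))
      ≤ ∫ x : ℝ, Real.exp (-v * Real.cosh (x + a)) := by
        refine setIntegral_le_integral (integrable_shift a hv) ?_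
        exact Filter.Eventually.of_forall fun x => exp_cosh_nonneg v _
    _ = ∫ x : ℝ, Real.exp (-v * Real.cosh x) :=
        integral_add_right_eq_self (fun x => Real.exp (-v * Real.cosh x)) a
    _ = 2 * K0 v := integral_exp_cosh v

lemma K0_nonneg (v : ℝ) : 0 ≤ K0 v :=
  setIntegral_nonneg measurableSet_Ioi fun t _ => exp_cosh_nonneg v t

lemma K0_mono {β v : ℝ} (hβ : 0 < β) (hβ1 : β ≤ 1) (hv : 0 < v) : K0 v ≤ K0 (β * v) := by
  refine setIntegral_mono_on (integrableOn_Ioi_exp_cosh hv)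
    (integrableOn_Ioi_exp_cosh (mul_pos hβ hv)) measurableSet_Ioi fun t _ => ?_
  rw [Real.exp_le_exp]
  have hc := (Real.cosh_pos t).le
  nlinarith [mul_nonneg (mul_nonneg (sub_nonneg.2 hβ1) hv.le) hc]


lemma integrableOn_phi {v : ℝ} (u : ℝ) (hv : 0 < v) :
    IntegrableOn (fun x => phiKer x u v) (Set.Ioi 0) := by
  have h1 : ∀ x : ℝ, x + u - 1 = x + (u - 1) := fun x => by ring
  have h2 : ∀ x : ℝ, x - u + 1 = x + (1 - u) := fun x => by ring
  have h3 : ∀ x : ℝ, x + u + 1 = x + (u + 1) := fun x => by ring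
  have h4 : ∀ x : ℝ, x - u - 1 = x + (-u - 1) := fun x => by ring
  simp only [phiKer, h1, h2, h3, h4]
  exact ((((integrable_shift (u-1) hv).integrableOn.add
    (integrable_shift (1-u) hv).integrableOn).sub
    (integrable_shift (u+1) hv).integrableOn).sub
    (integrable_shift (-u-1) hv).integrableOn)

lemma setIntegral_abs_phi_le {v : ℝ} (u : ℝ) (hv : 0 < v) :
    ∫ x in Set.Ioi 0, |phiKer x u v| ≤ 8 * K0 v := by
  have h1 : ∀ x : ℝ, x + u - 1 = x + (u - 1) := fun x => by ring
  have h2 : ∀ x : ℝ, x - u + 1 = x + (1 - u) := fun x => by ring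
  have h3 : ∀ x : ℝ, x + u + 1 = x + (u + 1) := fun x => by ring
  have h4 : ∀ x : ℝ, x - u - 1 = x + (-u - 1) := fun x => by ring
  have hb : ∀ x : ℝ, |phiKer x u v| ≤ Real.exp (-v * Real.cosh (x + (u - 1)))
      + Real.exp (-v * Real.cosh (x + (1 - u))) + (Real.exp (-v * Real.cosh (x + (u + 1)))
      + Real.exp (-v * Real.cosh (x + (-u - 1)))) := by
    intro x
    simp only [phiKer, h1, h2, h3, h4]
    rw [abs_le]
    constructor <;>
      nlinarith [exp_cosh_nonneg v (x + (u - 1)), exp_cosh_nonneg v (x + (1 - u)),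
        exp_cosh_nonneg v (x + (u + 1)), exp_cosh_nonneg v (x + (-u - 1))]
  have hi1 := (integrable_shift (u-1) hv).integrableOn (s := Set.Ioi 0)
  have hi2 := (integrable_shift (1-u) hv).integrableOn (s := Set.Ioi 0)
  have hi3 := (integrable_shift (u+1) hv).integrableOn (s := Set.Ioi 0)
  have hi4 := (integrable_shift (-u-1) hv).integrableOn (s := Set.Ioi 0)
  calc ∫ x in Set.Ioi 0, |phiKer x u v|
      ≤ ∫ x in Set.Ioi 0, (Real.exp (-v * Real.cosh (x + (u - 1)))
        + Real.exp (-v * Real.cosh (x + (1 - u))) + (Real.exp (-v * Real.cosh (x + (u + 1)))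
        + Real.exp (-v * Real.cosh (x + (-u - 1))))) :=
      setIntegral_mono_on (integrableOn_phi u hv).abs
        (((hi1.add hi2).add (hi3.add hi4))) measurableSet_Ioi fun x _ => hb x
    _ = (∫ x in Set.Ioi 0, Real.exp (-v * Real.cosh (x + (u - 1))))
        + (∫ x in Set.Ioi 0, Real.exp (-v * Real.cosh (x + (1 - u))))
        + ((∫ x in Set.Ioi 0, Real.exp (-v * Real.cosh (x + (u + 1))))
        + (∫ x in Set.Ioi 0, Real.exp (-v * Real.cosh (x + (-u - 1))))) := by
      have hi12 : IntegrableOn (fun x => Real.exp (-v * Real.cosh (x + (u - 1)))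
          + Real.exp (-v * Real.cosh (x + (1 - u)))) (Set.Ioi 0) := hi1.add hi2
      have hi34 : IntegrableOn (fun x => Real.exp (-v * Real.cosh (x + (u + 1)))
          + Real.exp (-v * Real.cosh (x + (-u - 1)))) (Set.Ioi 0) := hi3.add hi4
      rw [integral_add hi12 hi34, integral_add hi1 hi2, integral_add hi3 hi4]
    _ ≤ 2 * K0 v + 2 * K0 v + (2 * K0 v + 2 * K0 v) :=
      add_le_add (add_le_add (setIntegral_shift_le _ hv) (setIntegral_shift_le _ hv))
        (add_le_add (setIntegral_shift_le _ hv) (setIntegral_shift_le _ hv))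
    _ = 8 * K0 v := by ring

end GAux

theorem gconv_L1_bound (β : ℝ) (hβ : β ∈ Set.Ioc (0 : ℝ) 1) (f g : ℝ → ℝ)
    (hf : MeasureTheory.IntegrableOn f (Set.Ioi 0))
    (hg : Measurable g)
    (hgK : MeasureTheory.IntegrableOn (fun v => |g v| * K0 (β * v)) (Set.Ioi 0)) :
    (∀ᵐ x ∂(MeasureTheory.volume.restrict (Set.Ioi (0 : ℝ))),
      MeasureTheory.IntegrableOn (fun w : ℝ × ℝ => phiKer x w.1 w.2 * f w.1 * g w.2)
        (Set.Ioi 0 ×ˢ Set.Ioi 0)) ∧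
    MeasureTheory.IntegrableOn (gconv f g) (Set.Ioi 0) ∧
    (∫ x in Set.Ioi (0 : ℝ), |gconv f g x|) ≤
      2 * (∫ u in Set.Ioi (0 : ℝ), |f u|) * (∫ v in Set.Ioi (0 : ℝ), |g v| * K0 (β * v)) := by
  obtain ⟨hβ0, hβ1⟩ := hβ
  have hphi : Continuous fun p : ℝ × (ℝ × ℝ) => phiKer p.1 p.2.1 p.2.2 := by
    unfold phiKer; fun_prop
  have hHm : AEStronglyMeasurable
      (fun p : ℝ × (ℝ × ℝ) => phiKer p.1 p.2.1 p.2.2 * f p.2.1 * g p.2.2)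
      ((volume.restrict (Set.Ioi (0:ℝ))).prod
        ((volume.restrict (Set.Ioi (0:ℝ))).prod (volume.restrict (Set.Ioi (0:ℝ))))) := by
    refine (hphi.aestronglyMeasurable.mul ?_).mul ?_
    · exact (hf.aestronglyMeasurable.comp_fst).comp_snd
    · exact (hg.comp (measurable_snd.comp measurable_snd)).aestronglyMeasurable
  have hae2 : ∀ᵐ w : ℝ × ℝ ∂((volume.restrict (Set.Ioi (0:ℝ))).prod
      (volume.restrict (Set.Ioi (0:ℝ)))), 0 < w.1 ∧ 0 < w.2 := by
    have h1 := Measure.quasiMeasurePreserving_fst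
      (μ := volume.restrict (Set.Ioi (0:ℝ))) (ν := volume.restrict (Set.Ioi (0:ℝ)))
    have h2 := Measure.quasiMeasurePreserving_snd
      (μ := volume.restrict (Set.Ioi (0:ℝ))) (ν := volume.restrict (Set.Ioi (0:ℝ)))
    exact (h1.ae (ae_restrict_mem measurableSet_Ioi)).and
      (h2.ae (ae_restrict_mem measurableSet_Ioi))
  have hslice : ∀ᵐ w : ℝ × ℝ ∂((volume.restrict (Set.Ioi (0:ℝ))).prod
      (volume.restrict (Set.Ioi (0:ℝ)))),
      Integrable (fun x => phiKer x w.1 w.2 * f w.1 * g w.2)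
        (volume.restrict (Set.Ioi (0:ℝ))) := by
    filter_upwards [hae2] with w hw
    exact ((GAux.integrableOn_phi w.1 hw.2).mul_const (f w.1)).mul_const (g w.2)
  have hKint : Integrable (fun w : ℝ × ℝ => |f w.1| * (8 * (|g w.2| * K0 (β * w.2))))
      ((volume.restrict (Set.Ioi (0:ℝ))).prod (volume.restrict (Set.Ioi (0:ℝ)))) :=
    Integrable.mul_prod hf.abs (hgK.const_mul 8)
  have hNmeas : AEStronglyMeasurable
      (fun w : ℝ × ℝ => ∫ x, ‖phiKer x w.1 w.2 * f w.1 * g w.2‖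
        ∂(volume.restrict (Set.Ioi (0:ℝ))))
      ((volume.restrict (Set.Ioi (0:ℝ))).prod (volume.restrict (Set.Ioi (0:ℝ)))) := by
    exact (hHm.norm.prod_swap).integral_prod_right'
  have hbound : ∀ᵐ w : ℝ × ℝ ∂((volume.restrict (Set.Ioi (0:ℝ))).prod
      (volume.restrict (Set.Ioi (0:ℝ)))),
      ‖∫ x, ‖phiKer x w.1 w.2 * f w.1 * g w.2‖ ∂(volume.restrict (Set.Ioi (0:ℝ)))‖
        ≤ |f w.1| * (8 * (|g w.2| * K0 (β * w.2))) := by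
    filter_upwards [hae2] with w hw
    have hnn : 0 ≤ ∫ x, ‖phiKer x w.1 w.2 * f w.1 * g w.2‖
        ∂(volume.restrict (Set.Ioi (0:ℝ))) := integral_nonneg fun x => norm_nonneg _
    rw [Real.norm_eq_abs, abs_of_nonneg hnn]
    have hfe : (fun x => ‖phiKer x w.1 w.2 * f w.1 * g w.2‖)
        = fun x => |phiKer x w.1 w.2| * (|f w.1| * |g w.2|) := by
      funext x; rw [Real.norm_eq_abs, abs_mul, abs_mul]; ring
    rw [hfe, integral_mul_const]
    have h8 : (∫ x in Set.Ioi (0:ℝ), |phiKer x w.1 w.2|) ≤ 8 * K0 (β * w.2) := by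
      refine (GAux.setIntegral_abs_phi_le w.1 hw.2).trans ?_
      have := GAux.K0_mono hβ0 hβ1 hw.2
      linarith
    calc (∫ x in Set.Ioi (0:ℝ), |phiKer x w.1 w.2|) * (|f w.1| * |g w.2|)
        ≤ (8 * K0 (β * w.2)) * (|f w.1| * |g w.2|) :=
          mul_le_mul_of_nonneg_right h8 (by positivity)
      _ = |f w.1| * (8 * (|g w.2| * K0 (β * w.2))) := by ring
  have hint : Integrable
      (fun w : ℝ × ℝ => ∫ x, ‖phiKer x w.1 w.2 * f w.1 * g w.2‖
        ∂(volume.restrict (Set.Ioi (0:ℝ))))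
      ((volume.restrict (Set.Ioi (0:ℝ))).prod (volume.restrict (Set.Ioi (0:ℝ)))) :=
    Integrable.mono' hKint hNmeas hbound
  have hHint : Integrable (fun p : ℝ × (ℝ × ℝ) => phiKer p.1 p.2.1 p.2.2 * f p.2.1 * g p.2.2)
      ((volume.restrict (Set.Ioi (0:ℝ))).prod
        ((volume.restrict (Set.Ioi (0:ℝ))).prod (volume.restrict (Set.Ioi (0:ℝ))))) :=
    (integrable_prod_iff' hHm).2 ⟨hslice, hint⟩
  have hmeas_eq : (volume.restrict (Set.Ioi (0:ℝ))).prod (volume.restrict (Set.Ioi (0:ℝ)))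
      = (volume : Measure (ℝ × ℝ)).restrict (Set.Ioi 0 ×ˢ Set.Ioi 0) := by
    rw [Measure.prod_restrict]; rfl
  have c1 : ∀ᵐ x ∂(volume.restrict (Set.Ioi (0:ℝ))),
      IntegrableOn (fun w : ℝ × ℝ => phiKer x w.1 w.2 * f w.1 * g w.2)
        (Set.Ioi 0 ×ˢ Set.Ioi 0) := by
    filter_upwards [hHint.prod_right_ae] with x hx
    rw [IntegrableOn, ← hmeas_eq]
    exact hx
  have heq : ∀ᵐ x ∂(volume.restrict (Set.Ioi (0:ℝ))),
      gconv f g x = (1/4) * ∫ w : ℝ × ℝ, phiKer x w.1 w.2 * f w.1 * g w.2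
        ∂((volume.restrict (Set.Ioi (0:ℝ))).prod (volume.restrict (Set.Ioi (0:ℝ)))) := by
    filter_upwards [hHint.prod_right_ae] with x hx
    have hsymm := integral_prod_symm
      (fun w : ℝ × ℝ => phiKer x w.1 w.2 * f w.1 * g w.2) hx
    rw [gconv, hsymm]
  have hI : Integrable (fun x => (1/4 : ℝ) * ∫ w : ℝ × ℝ,
      phiKer x w.1 w.2 * f w.1 * g w.2
        ∂((volume.restrict (Set.Ioi (0:ℝ))).prod (volume.restrict (Set.Ioi (0:ℝ)))))
      (volume.restrict (Set.Ioi (0:ℝ))) :=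
    hHint.integral_prod_left.const_mul _
  have c2 : IntegrableOn (gconv f g) (Set.Ioi 0) :=
    hI.congr (heq.mono fun x h => h.symm)
  refine ⟨c1, c2, ?_⟩
  have habs : ∀ᵐ x ∂(volume.restrict (Set.Ioi (0:ℝ))),
      |gconv f g x| = (1/4) * |∫ w : ℝ × ℝ, phiKer x w.1 w.2 * f w.1 * g w.2
        ∂((volume.restrict (Set.Ioi (0:ℝ))).prod (volume.restrict (Set.Ioi (0:ℝ))))| :=
    heq.mono fun x h => by
      rw [h, abs_mul, abs_of_pos (by norm_num : (0:ℝ) < 1/4)]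
  calc (∫ x in Set.Ioi (0:ℝ), |gconv f g x|)
      = ∫ x in Set.Ioi (0:ℝ), (1/4) * |∫ w : ℝ × ℝ, phiKer x w.1 w.2 * f w.1 * g w.2
        ∂((volume.restrict (Set.Ioi (0:ℝ))).prod (volume.restrict (Set.Ioi (0:ℝ))))| :=
      integral_congr_ae habs
    _ = (1/4) * ∫ x in Set.Ioi (0:ℝ), |∫ w : ℝ × ℝ, phiKer x w.1 w.2 * f w.1 * g w.2
        ∂((volume.restrict (Set.Ioi (0:ℝ))).prod (volume.restrict (Set.Ioi (0:ℝ))))| :=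
      integral_const_mul _ _
    _ ≤ (1/4) * ∫ x in Set.Ioi (0:ℝ), ∫ w : ℝ × ℝ, ‖phiKer x w.1 w.2 * f w.1 * g w.2‖
        ∂((volume.restrict (Set.Ioi (0:ℝ))).prod (volume.restrict (Set.Ioi (0:ℝ)))) := by
      refine mul_le_mul_of_nonneg_left ?_ (by norm_num)
      refine integral_mono_ae hHint.integral_prod_left.abs
        hHint.integral_norm_prod_left ?_
      refine Filter.Eventually.of_forall fun x => ?_
      dsimp only
      rw [← Real.norm_eq_abs]
      exact norm_integral_le_integral_norm _
    _ = (1/4) * ∫ w : ℝ × ℝ, (∫ x, ‖phiKer x w.1 w.2 * f w.1 * g w.2‖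
        ∂(volume.restrict (Set.Ioi (0:ℝ))))
        ∂((volume.restrict (Set.Ioi (0:ℝ))).prod (volume.restrict (Set.Ioi (0:ℝ)))) := by
      rw [← integral_prod _ hHint.norm, integral_prod_symm _ hHint.norm]
    _ ≤ (1/4) * ∫ w : ℝ × ℝ, |f w.1| * (8 * (|g w.2| * K0 (β * w.2)))
        ∂((volume.restrict (Set.Ioi (0:ℝ))).prod (volume.restrict (Set.Ioi (0:ℝ)))) := by
      refine mul_le_mul_of_nonneg_left ?_ (by norm_num)
      refine integral_mono_ae hint hKint ?_
      filter_upwards [hbound] with w hw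
      exact (le_abs_self _).trans (by rw [← Real.norm_eq_abs]; exact hw)
    _ = (1/4) * ((∫ u in Set.Ioi (0:ℝ), |f u|) *
        (8 * ∫ v in Set.Ioi (0:ℝ), |g v| * K0 (β * v))) := by
      rw [integral_prod_mul (f := fun u => |f u|) (g := fun v => 8 * (|g v| * K0 (β * v))),
        integral_const_mul]
    _ = 2 * (∫ u in Set.Ioi (0:ℝ), |f u|) * (∫ v in Set.Ioi (0:ℝ), |g v| * K0 (β * v)) := by
      ring
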